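/- arXiv:1408.0531 — 4 statements merged into one kernel-verified Lean document; each statement's English description precedes it below -/
import Mathlib

section
/- Let H and C_1, …, C_r be subgraphs of K_n where H is a Hamilton cycle and each C_i is a 4-cycle correctly embedded in H (each C_i has exactly two opposite edges in H and switching gives a Hamilton cycle), and no two of the C_i are crossing relative to H. Then the symmetric difference E(H) △ E(C_1) △ ⋯ △ E(C_r) forms a Hamilton cycle of K_n. -/
open Finset

/-- A Hamilton cycle of `K_n`, viewed as a connected 2-regular spanning subgraph
of the complete graph on vertex set `Fin n`. -/
def IsHamCycle {n : ℕ} (H : SimpleGraph (Fin n)) : Prop :=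
  H.Connected ∧ ∀ v, (H.neighborSet v).ncard = 2

/-- Total weight `w(G)` of (the edges of) a subgraph `G` of `K_n`. -/
noncomputable def wt {n : ℕ} (w : Sym2 (Fin n) → ℤ) (G : SimpleGraph (Fin n)) : ℤ :=
  ∑ e ∈ (Set.toFinite G.edgeSet).toFinset, w e

/-- The standard Hamilton cycle `0 1 2 ⋯ (n-1) 0` of `K_n`. -/
def stdCycle (n : ℕ) [NeZero n] : SimpleGraph (Fin n) := SimpleGraph.fromRel (fun i j => j = i + 1)

/-- The 4-cycle of `K_n` correctly embedded in the standard Hamilton cycle that uses its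
edges `e_a = {a, a+1}` and `e_b = {b, b+1}` together with the two crossing chords. -/
def C4 {n : ℕ} [NeZero n] (a b : Fin n) : Set (Sym2 (Fin n)) :=
  {s(a, a + 1), s(b, b + 1), s(a, b), s(a + 1, b + 1)}

/-- Interleaving (crossing) of chords, via the positions along the standard cycle. -/
def Crossing {n : ℕ} (p q : Fin n × Fin n) : Prop :=
  (p.1 < q.1 ∧ q.1 < p.2 ∧ p.2 < q.2) ∨ (q.1 < p.1 ∧ p.1 < q.2 ∧ q.2 < p.2)

/-- Iterated symmetric difference `A △ B₁ △ ⋯ △ B_r`. -/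
def symmDiffList {α : Type*} : Set α → List (Set α) → Set α
  | A, [] => A
  | A, B :: L => symmDiffList (symmDiff A B) L

namespace Stmt13Aux

variable {n : ℕ}

theorem val_add_one' [NeZero n] (i : Fin n) : (i + 1).val = (i.val + 1) % n := by
  simp [Fin.add_def, Fin.val_one']

theorem succ_cases [NeZero n] (i : Fin n) :
    ((i + 1).val = i.val + 1 ∧ i.val + 1 < n) ∨ ((i + 1).val = 0 ∧ i.val + 1 = n) := by
  have h := val_add_one' i
  have h2 := i.isLt
  rcases Nat.lt_or_ge (i.val + 1) n with h3 | h3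
  · left; rw [Nat.mod_eq_of_lt h3] at h; exact ⟨h, h3⟩
  · right
    have h4 : i.val + 1 = n := by omega
    rw [h4, Nat.mod_self] at h
    exact ⟨h, h4⟩

theorem add_one_ne [NeZero n] (hn : 3 ≤ n) (i : Fin n) : i + 1 ≠ i := by
  intro h
  have h1 := congrArg Fin.val h
  rcases succ_cases i with ⟨h2, h3⟩ | ⟨h2, h3⟩ <;> omega

/-- The edge set of the Hamilton cycle `f 0, f 1, …, f (n-1), f 0`. -/
def posEdges [NeZero n] (f : Fin n → Fin n) : Set (Sym2 (Fin n)) :=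
  {e | ∃ i, e = s(f i, f (i + 1))}

/-- The correctly embedded 4-cycle relative to the Hamilton cycle determined by `f`,
using the cycle edges at positions `a` and `b`. -/
def C4f [NeZero n] (f : Fin n → Fin n) (a b : Fin n) : Set (Sym2 (Fin n)) :=
  {s(f a, f (a + 1)), s(f b, f (b + 1)), s(f a, f b), s(f (a + 1), f (b + 1))}

/-- Reversal of the block of positions `a+1, …, b`. -/
def rev (a b i : Fin n) : Fin n :=
  if h : a.val < i.val ∧ i.val ≤ b.val then
    ⟨a.val + b.val + 1 - i.val, by have := b.isLt; omega⟩ else i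

theorem rev_val_pos {a b i : Fin n} (h : a.val < i.val ∧ i.val ≤ b.val) :
    (rev a b i).val = a.val + b.val + 1 - i.val := by
  rw [rev, dif_pos h]

theorem rev_neg {a b i : Fin n} (h : ¬(a.val < i.val ∧ i.val ≤ b.val)) : rev a b i = i := by
  rw [rev, dif_neg h]

theorem rev_invol (a b : Fin n) : Function.Involutive (rev a b) := by
  intro i
  by_cases h : a.val < i.val ∧ i.val ≤ b.val
  · have h1 := rev_val_pos h
    have h2 : a.val < (rev a b i).val ∧ (rev a b i).val ≤ b.val := by omega
    apply Fin.ext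
    rw [rev_val_pos h2, h1]
    omega
  · rw [rev_neg h, rev_neg h]

/-- The map induced by `rev a b` on edge positions. -/
def osw (a b i : Fin n) : Fin n :=
  if h : a.val < i.val ∧ i.val < b.val then
    ⟨a.val + b.val - i.val, by have := b.isLt; omega⟩ else i

theorem osw_val_pos {a b i : Fin n} (h : a.val < i.val ∧ i.val < b.val) :
    (osw a b i).val = a.val + b.val - i.val := by
  rw [osw, dif_pos h]

theorem osw_neg {a b i : Fin n} (h : ¬(a.val < i.val ∧ i.val < b.val)) : osw a b i = i := by
  rw [osw, dif_neg h]

theorem osw_invol (a b : Fin n) : Function.Involutive (osw a b) := by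
  intro i
  by_cases h : a.val < i.val ∧ i.val < b.val
  · have h1 := osw_val_pos h
    have h2 : a.val < (osw a b i).val ∧ (osw a b i).val < b.val := by omega
    apply Fin.ext
    rw [osw_val_pos h2, h1]
    omega
  · rw [osw_neg h, osw_neg h]

theorem ef_inj [NeZero n] (hn : 3 ≤ n) {f : Fin n → Fin n} (hf : Function.Injective f)
    {i j : Fin n} (h : s(f i, f (i + 1)) = s(f j, f (j + 1))) : i = j := by
  rw [Sym2.eq_iff] at h
  rcases h with ⟨h1, _⟩ | ⟨h1, h2⟩
  · exact hf h1
  · exfalso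
    have e1 : i = j + 1 := hf h1
    have e2 : i + 1 = j := hf h2
    have v1 := congrArg Fin.val e1
    have v2 := congrArg Fin.val e2
    rcases succ_cases j with ⟨c1, c2⟩ | ⟨c1, c2⟩ <;>
      rcases succ_cases i with ⟨d1, d2⟩ | ⟨d1, d2⟩ <;> omega

theorem symmDiffList_cons {α : Type*} (A B : Set α) (L : List (Set α)) :
    symmDiffList A (B :: L) = symmDiffList (symmDiff A B) L := rfl

theorem symmDiffList_perm {α : Type*} {L₁ L₂ : List (Set α)} (h : L₁.Perm L₂) :
    ∀ A : Set α, symmDiffList A L₁ = symmDiffList A L₂ := by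
  induction h with
  | nil => intro A; rfl
  | cons x _ ih => intro A; exact ih _
  | swap x y l =>
      intro A
      show symmDiffList (symmDiff (symmDiff A y) x) l = symmDiffList (symmDiff (symmDiff A x) y) l
      rw [symmDiff_right_comm]
  | trans _ _ ih1 ih2 => intro A; rw [ih1, ih2]

theorem symmDiff_quad {α : Type*} {A : Set α} {E1 E2 D1 D2 : α}
    (hE1 : E1 ∈ A) (hE2 : E2 ∈ A) (hD1 : D1 ∉ A) (hD2 : D2 ∉ A)
    (h12 : E1 ≠ E2) (hd : D1 ≠ D2) :
    symmDiff A {E1, E2, D1, D2} = (A \ {E1, E2}) ∪ {D1, D2} := by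
  ext x
  by_cases x1 : x = E1 <;> by_cases x2 : x = E2 <;> by_cases x3 : x = D1 <;>
    by_cases x4 : x = D2 <;>
    simp_all [Set.mem_symmDiff]

section Main

variable [NeZero n] {f : Fin n → Fin n} {a b : Fin n}

theorem a1_val {a b : Fin n} (hab : a.val + 1 < b.val) : (a + 1).val = a.val + 1 := by
  have := b.isLt
  rcases succ_cases a with ⟨h, _⟩ | ⟨_, h⟩
  · exact h
  · omega

theorem D1_not_mem (hf : Function.Injective f)
    (hab : a.val + 1 < b.val) (hba : a ≠ b + 1) : s(f a, f b) ∉ posEdges f := by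
  rintro ⟨i, h⟩
  rw [Sym2.eq_iff] at h
  rcases h with ⟨h1, h2⟩ | ⟨h1, h2⟩
  · have e1 := hf h1
    have e2 := hf h2
    subst e1
    have h3 := congrArg Fin.val e2
    rw [a1_val hab] at h3
    omega
  · exact hba (by rw [hf h1, hf h2])

theorem D2_not_mem (hf : Function.Injective f)
    (hab : a.val + 1 < b.val) (hba : a ≠ b + 1) :
    s(f (a + 1), f (b + 1)) ∉ posEdges f := by
  rintro ⟨i, h⟩
  rw [Sym2.eq_iff] at h
  rcases h with ⟨h1, h2⟩ | ⟨h1, h2⟩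
  · have e1 := hf h1
    have e2 := hf h2
    rw [← e1] at e2
    have e3 : b = a + 1 := add_right_cancel e2
    have h3 := congrArg Fin.val e3
    rw [a1_val hab] at h3
    omega
  · have e1 : a = i := add_right_cancel (hf h1)
    have e2 := hf h2
    exact hba (by rw [e1, ← e2])

theorem E12_ne (hn : 3 ≤ n) (hf : Function.Injective f) (hab : a.val + 1 < b.val) :
    s(f a, f (a + 1)) ≠ s(f b, f (b + 1)) := by
  intro h
  have h2 := congrArg Fin.val (ef_inj hn hf h)
  omega

theorem D12_ne (hn : 3 ≤ n) (hf : Function.Injective f) (hba : a ≠ b + 1) :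
    s(f a, f b) ≠ s(f (a + 1), f (b + 1)) := by
  intro h
  rw [Sym2.eq_iff] at h
  rcases h with ⟨h1, _⟩ | ⟨h1, _⟩
  · exact add_one_ne hn a (hf h1).symm
  · exact hba (hf h1)

theorem edge_comp_rev (hab : a.val + 1 < b.val) (i : Fin n) :
    s(f (rev a b i), f (rev a b (i + 1))) =
      if i = a then s(f a, f b)
      else if i = b then s(f (a + 1), f (b + 1))
      else s(f (osw a b i), f (osw a b i + 1)) := by
  have hBn := b.isLt
  have hA1 : (a + 1).val = a.val + 1 := a1_val hab
  by_cases h1 : i = a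
  · subst h1
    rw [if_pos rfl]
    have r1 : rev i b i = i := rev_neg (by omega)
    have r2 : rev i b (i + 1) = b := by
      apply Fin.ext
      rw [rev_val_pos (by constructor <;> omega), hA1]
      omega
    rw [r1, r2]
  · by_cases h2 : i = b
    · subst h2
      rw [if_neg h1, if_pos rfl]
      have r1 : rev a i i = a + 1 := by
        apply Fin.ext
        rw [rev_val_pos (by omega), hA1]
        omega
      have r2 : rev a i (i + 1) = i + 1 := by
        apply rev_neg
        rcases succ_cases i with ⟨c1, c2⟩ | ⟨c1, c2⟩ <;> omega
      rw [r1, r2]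
    · rw [if_neg h1, if_neg h2]
      have hia : i.val ≠ a.val := fun hh => h1 (Fin.ext hh)
      have hib : i.val ≠ b.val := fun hh => h2 (Fin.ext hh)
      by_cases h3 : a.val < i.val ∧ i.val < b.val
      · have hi1 : (i + 1).val = i.val + 1 := by
          rcases succ_cases i with ⟨c1, _⟩ | ⟨_, c2⟩
          · exact c1
          · omega
        have ho := osw_val_pos h3
        have ho2 : (osw a b i + 1).val = (osw a b i).val + 1 := by
          rcases succ_cases (osw a b i) with ⟨c1, _⟩ | ⟨_, c2⟩
          · exact c1
          · omega
        have r1 : rev a b i = osw a b i + 1 := by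
          apply Fin.ext
          rw [rev_val_pos (by omega), ho2, ho]
          omega
        have r2 : rev a b (i + 1) = osw a b i := by
          apply Fin.ext
          rw [rev_val_pos (by omega), ho]
          omega
        rw [r1, r2, Sym2.eq_swap]
      · have ho : osw a b i = i := osw_neg h3
        have r1 : rev a b i = i := rev_neg (by omega)
        have r2 : rev a b (i + 1) = i + 1 := by
          apply rev_neg
          rcases succ_cases i with ⟨c1, _⟩ | ⟨c1, _⟩ <;> omega
        rw [r1, r2, ho]

omit [NeZero n] in
theorem osw_ne (hab : a.val + 1 < b.val) {j : Fin n} (hja : j ≠ a) (hjb : j ≠ b) :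
    osw a b j ≠ a ∧ osw a b j ≠ b := by
  by_cases h3 : a.val < j.val ∧ j.val < b.val
  · have := osw_val_pos h3
    constructor <;> (intro hh; have := congrArg Fin.val hh; omega)
  · rw [osw_neg h3]; exact ⟨hja, hjb⟩

theorem posEdges_comp_rev (hn : 3 ≤ n) (hf : Function.Injective f)
    (hab : a.val + 1 < b.val) :
    posEdges (f ∘ rev a b) =
      (posEdges f \ {s(f a, f (a + 1)), s(f b, f (b + 1))}) ∪
        {s(f a, f b), s(f (a + 1), f (b + 1))} := by
  have hBn := b.isLt
  have hba' : b ≠ a := fun hh => by have := congrArg Fin.val hh; omega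
  ext e
  simp only [Set.mem_union, Set.mem_diff, Set.mem_insert_iff, Set.mem_singleton_iff]
  constructor
  · rintro ⟨i, rfl⟩
    simp only [Function.comp_apply]
    rw [edge_comp_rev hab i]
    split_ifs with h1 h2
    · exact Or.inr (Or.inl rfl)
    · exact Or.inr (Or.inr rfl)
    · left
      refine ⟨⟨osw a b i, rfl⟩, ?_⟩
      obtain ⟨hna, hnb⟩ := osw_ne hab h1 h2
      rintro (hh | hh)
      · exact hna (ef_inj hn hf hh)
      · exact hnb (ef_inj hn hf hh)
  · rintro (⟨⟨j, rfl⟩, hne⟩ | hh | hh)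
    · have hja : j ≠ a := fun hh2 => hne (Or.inl (by rw [hh2]))
      have hjb : j ≠ b := fun hh2 => hne (Or.inr (by rw [hh2]))
      obtain ⟨hna, hnb⟩ := osw_ne hab hja hjb
      refine ⟨osw a b j, ?_⟩
      have h := edge_comp_rev (f := f) hab (osw a b j)
      rw [if_neg hna, if_neg hnb, osw_invol] at h
      simp only [Function.comp_apply]
      exact h.symm
    · refine ⟨a, ?_⟩
      have h := edge_comp_rev (f := f) hab a
      rw [if_pos rfl] at h
      simp only [Function.comp_apply]
      rw [hh]
      exact h.symm
    · refine ⟨b, ?_⟩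
      have h := edge_comp_rev (f := f) hab b
      rw [if_neg hba', if_pos rfl] at h
      simp only [Function.comp_apply]
      rw [hh]
      exact h.symm

theorem C4f_comp_rev {x y : Fin n}
    (hx : x.val < a.val ∨ b.val < x.val) (hy : y.val < a.val ∨ b.val < y.val) :
    C4f (f ∘ rev a b) x y = C4f f x y := by
  have fix : ∀ z : Fin n, z.val < a.val ∨ b.val < z.val →
      rev a b z = z ∧ rev a b (z + 1) = z + 1 := by
    intro z hz
    have := a.isLt
    constructor
    · exact rev_neg (by omega)
    · apply rev_neg
      rcases succ_cases z with ⟨c1, _⟩ | ⟨c1, _⟩ <;> omega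
  obtain ⟨r1, r2⟩ := fix x hx
  obtain ⟨r3, r4⟩ := fix y hy
  simp only [C4f, Function.comp_apply, r1, r2, r3, r4]

end Main

open Fin.NatCast Fin.CommRing in
theorem stdCycle_conn [NeZero n] (hn : 3 ≤ n) : (stdCycle n).Connected := by
  rw [SimpleGraph.connected_iff]
  refine ⟨?_, ⟨0⟩⟩
  have key : ∀ m : ℕ, (stdCycle n).Reachable 0 (m : Fin n) := by
    intro m
    induction m with
    | zero => simp only [Nat.cast_zero]; exact SimpleGraph.Reachable.refl 0
    | succ m ih =>
      have hadj : (stdCycle n).Adj (m : Fin n) ((m : Fin n) + 1) := by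
        rw [stdCycle, SimpleGraph.fromRel_adj]
        exact ⟨(add_one_ne hn _).symm, Or.inl rfl⟩
      have hc : ((m + 1 : ℕ) : Fin n) = (m : Fin n) + 1 := by push_cast; ring
      rw [hc]
      exact ih.trans hadj.reachable
  intro u v
  have hu := key u.val
  have hv := key v.val
  rw [Fin.cast_val_eq_self] at hu hv
  exact hu.symm.trans hv

theorem stdCycle_nbhd [NeZero n] (hn : 3 ≤ n) (v : Fin n) :
    (stdCycle n).neighborSet v = {v + 1, v - 1} := by
  ext u
  simp only [SimpleGraph.mem_neighborSet, stdCycle, SimpleGraph.fromRel_adj,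
    Set.mem_insert_iff, Set.mem_singleton_iff]
  constructor
  · rintro ⟨hne, h | h⟩
    · left; exact h
    · right; rw [eq_sub_iff_add_eq]; exact h.symm
  · rintro (rfl | rfl)
    · exact ⟨Ne.symm (add_one_ne hn v), Or.inl rfl⟩
    · constructor
      · intro hh
        have h2 : v - 1 + 1 = v := sub_add_cancel v 1
        rw [← hh] at h2
        exact add_one_ne hn v h2
      · right
        exact (sub_add_cancel v 1).symm

theorem stdCycle_ham [NeZero n] (hn : 3 ≤ n) : IsHamCycle (stdCycle n) := by
  refine ⟨stdCycle_conn hn, fun v => ?_⟩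
  rw [stdCycle_nbhd hn v]
  apply Set.ncard_pair
  intro h
  have h2 : v + 1 + 1 = v := by rw [h, sub_add_cancel]
  have h3 := congrArg Fin.val h2
  rcases succ_cases v with ⟨c1, c2⟩ | ⟨c1, c2⟩ <;>
    rcases succ_cases (v + 1) with ⟨d1, d2⟩ | ⟨d1, d2⟩ <;> omega

theorem isHamCycle_of_iso {G H : SimpleGraph (Fin n)} (φ : G ≃g H) (h : IsHamCycle G) :
    IsHamCycle H := by
  refine ⟨(SimpleGraph.Iso.connected_iff φ).mp h.1, fun v => ?_⟩
  have e := φ.mapNeighborSet (φ.symm v)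
  rw [φ.apply_symm_apply v] at e
  have h2 := Nat.card_congr e
  rw [Nat.card_coe_set_eq, Nat.card_coe_set_eq] at h2
  rw [← h2]
  exact h.2 _

theorem ham_posEdges [NeZero n] (hn : 3 ≤ n) {f : Fin n → Fin n}
    (hf : Function.Bijective f) :
    IsHamCycle (SimpleGraph.fromEdgeSet (posEdges f)) := by
  refine isHamCycle_of_iso ⟨Equiv.ofBijective f hf, ?_⟩ (stdCycle_ham hn)
  intro u v
  show (SimpleGraph.fromEdgeSet (posEdges f)).Adj (f u) (f v) ↔ (stdCycle n).Adj u v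
  rw [SimpleGraph.fromEdgeSet_adj, stdCycle, SimpleGraph.fromRel_adj]
  constructor
  · rintro ⟨⟨i, hi⟩, hne⟩
    refine ⟨fun hh => hne (congrArg f hh), ?_⟩
    rw [Sym2.eq_iff] at hi
    rcases hi with ⟨h1, h2⟩ | ⟨h1, h2⟩
    · left; rw [hf.injective h2, hf.injective h1]
    · right; rw [hf.injective h1, hf.injective h2]
  · rintro ⟨hne, h | h⟩
    · exact ⟨⟨u, by rw [h]⟩, hf.injective.ne hne⟩
    · exact ⟨⟨v, by rw [h, Sym2.eq_swap]⟩, hf.injective.ne hne⟩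

/-- The main induction: switching along a list of pairwise non-crossing, pairwise
position-disjoint correctly embedded 4-cycles preserves Hamiltonicity. -/
theorem aux [NeZero n] (hn : 3 ≤ n) :
    ∀ (r : ℕ) (L : List (Fin n × Fin n)) (f : Fin n → Fin n), L.length = r →
      Function.Bijective f →
      (∀ p ∈ L, p.1 < p.2) →
      (∀ p ∈ L, List.Pairwise (· ≠ ·) [p.1, p.1 + 1, p.2, p.2 + 1]) →
      L.Pairwise (fun p q =>
        (p.1 ≠ q.1 ∧ p.1 ≠ q.2 ∧ p.2 ≠ q.1 ∧ p.2 ≠ q.2) ∧ ¬Crossing p q) →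
      IsHamCycle (SimpleGraph.fromEdgeSet
        (symmDiffList (posEdges f) (L.map fun p => C4f f p.1 p.2))) := by
  intro r
  induction r using Nat.strong_induction_on with
  | _ r ih =>
  intro L f hlen hf hlt hvx hpair
  rcases eq_or_ne L [] with rfl | hL
  · exact ham_posEdges hn hf
  · obtain ⟨p, hp⟩ : ∃ p, p ∈ L.argmin (fun p => p.2.val - p.1.val) := by
      rcases h : L.argmin (fun p => p.2.val - p.1.val) with _ | p
      · exact absurd (List.argmin_eq_none.mp h) hL
      · exact ⟨p, by simp [h]⟩
    have hpL : p ∈ L := List.argmin_mem hp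
    have hmin : ∀ q ∈ L, p.2.val - p.1.val ≤ q.2.val - q.1.val :=
      fun q hq => List.le_of_mem_argmin hq hp
    obtain ⟨s, t, rfl⟩ := List.append_of_mem hpL
    set L' : List (Fin n × Fin n) := s ++ t with hL'def
    have hLperm : (s ++ p :: t).Perm (p :: L') := List.perm_middle.symm.symm
    have hmem : ∀ q ∈ L', q ∈ s ++ p :: t := by
      intro q hq
      rw [hL'def, List.mem_append] at hq
      rcases hq with hq | hq
      · exact List.mem_append_left _ hq
      · exact List.mem_append_right _ (List.mem_cons_of_mem _ hq)
    have hsymm : ∀ {x y : Fin n × Fin n},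
        ((x.1 ≠ y.1 ∧ x.1 ≠ y.2 ∧ x.2 ≠ y.1 ∧ x.2 ≠ y.2) ∧ ¬Crossing x y) →
        ((y.1 ≠ x.1 ∧ y.1 ≠ x.2 ∧ y.2 ≠ x.1 ∧ y.2 ≠ x.2) ∧ ¬Crossing y x) := by
      rintro x y ⟨⟨h1, h2, h3, h4⟩, h5⟩
      refine ⟨⟨h1.symm, h3.symm, h2.symm, h4.symm⟩, fun hc => h5 ?_⟩
      unfold Crossing at hc ⊢
      tauto
    have hpair' := (List.Perm.pairwise_iff hsymm hLperm).mp hpair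
    obtain ⟨hrel, hpairtail⟩ := List.pairwise_cons.mp hpair'
    have hltp : p.1.val < p.2.val := hlt p hpL
    have hvx6 : p.1 ≠ p.1 + 1 ∧ p.1 ≠ p.2 ∧ p.1 ≠ p.2 + 1 ∧ p.1 + 1 ≠ p.2 ∧
        p.1 + 1 ≠ p.2 + 1 ∧ p.2 ≠ p.2 + 1 := by
      have h6 := hvx p hpL
      obtain ⟨k1, k2⟩ := List.pairwise_cons.mp h6
      obtain ⟨k3, k4⟩ := List.pairwise_cons.mp k2
      obtain ⟨k5, _⟩ := List.pairwise_cons.mp k4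
      exact ⟨k1 _ (by simp), k1 _ (by simp), k1 _ (by simp), k3 _ (by simp),
        k3 _ (by simp), k5 _ (by simp)⟩
    have hab : p.1.val + 1 < p.2.val := by
      have h2 : (p.1 + 1).val ≠ p.2.val := fun hh => hvx6.2.2.2.1 (Fin.ext hh)
      have h3 := p.2.isLt
      rcases succ_cases p.1 with ⟨c1, _⟩ | ⟨_, c2⟩ <;> omega
    have hba : p.1 ≠ p.2 + 1 := hvx6.2.2.1
    have hout : ∀ q ∈ L',
        (q.1.val < p.1.val ∨ p.2.val < q.1.val) ∧
        (q.2.val < p.1.val ∨ p.2.val < q.2.val) := by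
      intro q hq
      obtain ⟨⟨n1, n2, n3, n4⟩, ncr⟩ := hrel q hq
      have hql : q.1.val < q.2.val := hlt q (hmem q hq)
      have hm := hmin q (hmem q hq)
      have m1 : p.1.val ≠ q.1.val := fun hh => n1 (Fin.ext hh)
      have m2 : p.1.val ≠ q.2.val := fun hh => n2 (Fin.ext hh)
      have m3 : p.2.val ≠ q.1.val := fun hh => n3 (Fin.ext hh)
      have m4 : p.2.val ≠ q.2.val := fun hh => n4 (Fin.ext hh)
      unfold Crossing at ncr
      simp only [Fin.lt_def] at ncr
      omega
    have hmapc : (L'.map fun q => C4f f q.1 q.2) =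
        L'.map fun q => C4f (f ∘ rev p.1 p.2) q.1 q.2 :=
      List.map_congr_left fun q hq => (C4f_comp_rev (hout q hq).1 (hout q hq).2).symm
    have hstep : symmDiff (posEdges f) (C4f f p.1 p.2) = posEdges (f ∘ rev p.1 p.2) := by
      have hq := symmDiff_quad (A := posEdges f)
        ⟨p.1, rfl⟩ ⟨p.2, rfl⟩ (D1_not_mem hf.injective hab hba)
        (D2_not_mem hf.injective hab hba) (E12_ne hn hf.injective hab)
        (D12_ne hn hf.injective hba)
      rw [show C4f f p.1 p.2 = ({s(f p.1, f (p.1 + 1)), s(f p.2, f (p.2 + 1)),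
        s(f p.1, f p.2), s(f (p.1 + 1), f (p.2 + 1))} : Set (Sym2 (Fin n))) from rfl]
      rw [hq, posEdges_comp_rev hn hf.injective hab]
    have e1 : symmDiffList (posEdges f) ((s ++ p :: t).map fun q => C4f f q.1 q.2) =
        symmDiffList (posEdges (f ∘ rev p.1 p.2))
          (L'.map fun q => C4f (f ∘ rev p.1 p.2) q.1 q.2) := by
      rw [symmDiffList_perm (hLperm.map _) (posEdges f)]
      rw [List.map_cons, symmDiffList_cons, hstep, hmapc]
    rw [e1]
    have hr : 1 ≤ r := by rw [← hlen]; exact List.length_pos_iff.mpr hL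
    have hlen' : L'.length = r - 1 := by
      have := hlen
      rw [List.length_append, List.length_cons] at this
      rw [hL'def, List.length_append]
      omega
    exact ih (r - 1) (by omega) L' (f ∘ rev p.1 p.2) hlen'
      (hf.comp (rev_invol p.1 p.2).bijective)
      (fun q hq => hlt q (hmem q hq))
      (fun q hq => hvx q (hmem q hq))
      hpairtail

end Stmt13Aux

open Stmt13Aux in
/-- if `C_1, …, C_r` are 4-cycles correctly embedded in the Hamilton cycle
`H = 0 1 ⋯ (n-1) 0` (using disjoint pairs of edges of `H`), no two of which are crossing
relative to `H`, then `E(H) △ E(C_1) △ ⋯ △ E(C_r)` is a Hamilton cycle. -/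
theorem stmt_13 (n : ℕ) [NeZero n] (hn : 3 ≤ n) (L : List (Fin n × Fin n))
    (hlt : ∀ p ∈ L, p.1 < p.2)
    (hvx : ∀ p ∈ L, List.Pairwise (· ≠ ·) [p.1, p.1 + 1, p.2, p.2 + 1])
    (hpair : L.Pairwise (fun p q =>
      (p.1 ≠ q.1 ∧ p.1 ≠ q.2 ∧ p.2 ≠ q.1 ∧ p.2 ≠ q.2) ∧ ¬ Crossing p q)) :
    IsHamCycle (SimpleGraph.fromEdgeSet
      (symmDiffList (stdCycle n).edgeSet (L.map (fun p => C4 p.1 p.2)))) := by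
  have e0 : (stdCycle n).edgeSet = posEdges (id : Fin n → Fin n) := by
    ext e
    induction e using Sym2.ind with
    | _ x y =>
      rw [SimpleGraph.mem_edgeSet]
      show (SimpleGraph.fromRel fun i j => j = i + 1).Adj x y ↔ _
      rw [SimpleGraph.fromRel_adj]
      simp only [posEdges, id_eq, Set.mem_setOf_eq]
      constructor
      · rintro ⟨hne, h | h⟩
        · exact ⟨x, by rw [h]⟩
        · exact ⟨y, by rw [h, Sym2.eq_swap]⟩
      · rintro ⟨i, hi⟩
        rw [Sym2.eq_iff] at hi
        rcases hi with ⟨h1, h2⟩ | ⟨h1, h2⟩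
        · subst h1; subst h2
          exact ⟨(add_one_ne hn x).symm, Or.inl rfl⟩
        · subst h1; subst h2
          exact ⟨add_one_ne hn y, Or.inr rfl⟩
  have e2 : (L.map fun p => C4 p.1 p.2) = L.map fun p => C4f (id : Fin n → Fin n) p.1 p.2 := by
    apply List.map_congr_left
    intro q _
    simp [C4, C4f]
  rw [e0, e2]
  exact aux hn L.length L id rfl Function.bijective_id hlt hvx hpair
end

section
/- Let w be an integer edge weighting of K_n with n > 65k + 3 (k ∈ ℚ, k ≥ 0) such that Σ_{C ∈ C_n} bal(C) ≤ k·n³. Then there exist integers (λ_v)_{v ∈ V(K_n)} and β ∈ ℤ such that the weighting w*(uv) := w(uv) + λ_u + λ_v + β satisfies w*(e) = 0 for all but at most 32k(n+1) edges e of K_n. -/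
open Finset

/-- Eight times the total balance `Σ_{C ∈ C_n} bal(C)` over all (unordered) 4-cycles of
`K_n`: each unordered 4-cycle `v1 v2 v3 v4 v1` corresponds to exactly 8 ordered quadruples
of distinct vertices on which `|w(v1v2)+w(v3v4)−w(v1v3)−w(v2v4)|` takes the value
`bal` of one of the three 4-cycles on those four vertices, each appearing 8 times. -/
def totalBal8 {n : ℕ} (w : Sym2 (Fin n) → ℤ) : ℤ :=
  ∑ v1 : Fin n, ∑ v2 : Fin n, ∑ v3 : Fin n, ∑ v4 : Fin n,
    if List.Pairwise (· ≠ ·) [v1, v2, v3, v4] then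
      |w s(v1, v2) + w s(v3, v4) - w s(v1, v3) - w s(v2, v4)| else 0

namespace Stmt15

variable {n : ℕ}

def t (w : Sym2 (Fin n) → ℤ) (v1 v2 v3 v4 : Fin n) : ℤ :=
  if List.Pairwise (· ≠ ·) [v1, v2, v3, v4] then
    |w s(v1, v2) + w s(v3, v4) - w s(v1, v3) - w s(v2, v4)| else 0

lemma t_nonneg (w : Sym2 (Fin n) → ℤ) (v1 v2 v3 v4 : Fin n) : 0 ≤ t w v1 v2 v3 v4 := by
  unfold t; split
  · exact abs_nonneg _
  · exact le_refl 0

lemma t_of_ne (w : Sym2 (Fin n) → ℤ) {v1 v2 v3 v4 : Fin n} (h12 : v1 ≠ v2) (h13 : v1 ≠ v3)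
    (h14 : v1 ≠ v4) (h23 : v2 ≠ v3) (h24 : v2 ≠ v4) (h34 : v3 ≠ v4) :
    t w v1 v2 v3 v4 = |w s(v1, v2) + w s(v3, v4) - w s(v1, v3) - w s(v2, v4)| := by
  unfold t
  rw [if_pos]
  simp [List.pairwise_cons, h12, h13, h14, h23, h24, h34]

lemma t_zero_of_eq23 (w : Sym2 (Fin n) → ℤ) (v1 v2 v4 : Fin n) : t w v1 v2 v2 v4 = 0 := by
  unfold t
  rw [if_neg]
  simp [List.pairwise_cons]

def S1 (w : Sym2 (Fin n) → ℤ) (a b : Fin n) : ℤ := ∑ x, ∑ y, t w a x y b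
def S2 (w : Sym2 (Fin n) → ℤ) (a b : Fin n) : ℤ := ∑ u, ∑ v, t w u v a b

lemma S1_nonneg (w : Sym2 (Fin n) → ℤ) (a b : Fin n) : 0 ≤ S1 w a b :=
  Finset.sum_nonneg fun _ _ => Finset.sum_nonneg fun _ _ => t_nonneg w _ _ _ _

lemma S2_nonneg (w : Sym2 (Fin n) → ℤ) (a b : Fin n) : 0 ≤ S2 w a b :=
  Finset.sum_nonneg fun _ _ => Finset.sum_nonneg fun _ _ => t_nonneg w _ _ _ _

lemma totalBal8_eq (w : Sym2 (Fin n) → ℤ) :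
    totalBal8 w = ∑ v1, ∑ v2, ∑ v3, ∑ v4, t w v1 v2 v3 v4 := rfl

lemma sum_S1 (w : Sym2 (Fin n) → ℤ) : ∑ a, ∑ b, S1 w a b = totalBal8 w := by
  rw [totalBal8_eq]
  unfold S1
  refine Finset.sum_congr rfl fun a _ => ?_
  rw [Finset.sum_comm]
  exact Finset.sum_congr rfl fun x _ => Finset.sum_comm

lemma sum_S2 (w : Sym2 (Fin n) → ℤ) : ∑ a, ∑ b, S2 w a b = totalBal8 w := by
  rw [totalBal8_eq]
  unfold S2
  calc ∑ a, ∑ b, ∑ u, ∑ v, t w u v a b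
      = ∑ a, ∑ u, ∑ b, ∑ v, t w u v a b :=
        Finset.sum_congr rfl fun a _ => Finset.sum_comm
    _ = ∑ u, ∑ a, ∑ b, ∑ v, t w u v a b := Finset.sum_comm
    _ = ∑ u, ∑ a, ∑ v, ∑ b, t w u v a b :=
        Finset.sum_congr rfl fun u _ => Finset.sum_congr rfl fun a _ => Finset.sum_comm
    _ = ∑ u, ∑ v, ∑ a, ∑ b, t w u v a b :=
        Finset.sum_congr rfl fun u _ => Finset.sum_comm

end Stmt15

lemma stmt15_arith (k N s1 s2 Ac C T : ℚ) (hk : 0 ≤ k) (hN : 4 ≤ N)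
    (f1 : (N - 2) * Ac ≤ s1) (f2 : C ≤ s2 + Ac * N)
    (f3 : (N * N - N) * (N * s1 + (N - 2) * s2) ≤ (2 * N - 2) * T)
    (hT : T ≤ 8 * (k * N ^ 3))
    (f5 : 0 ≤ s1) (f6 : 0 ≤ s2) (f7 : 0 ≤ Ac) : C ≤ 32 * k * (N + 1) := by
  have hpos : (0 : ℚ) < N * N - N := by nlinarith
  have G1 : N * s1 + (N - 2) * s2 ≤ 16 * k * N ^ 2 := by
    have h4 := mul_le_mul_of_nonneg_left hT (show (0 : ℚ) ≤ 2 * N - 2 by linarith)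
    have h5 : (N * N - N) * (N * s1 + (N - 2) * s2) ≤ (N * N - N) * (16 * k * N ^ 2) := by
      nlinarith [f3]
    exact le_of_mul_le_mul_left h5 hpos
  have G2 : (N - 2) * C ≤ 16 * k * N ^ 2 := by
    nlinarith [f1, f2, G1, mul_le_mul_of_nonneg_left f2 (show (0 : ℚ) ≤ N - 2 by linarith),
      mul_le_mul_of_nonneg_left f1 (show (0 : ℚ) ≤ N by linarith)]
  have hfin : (N - 2) * C ≤ (N - 2) * (32 * k * (N + 1)) := by
    nlinarith [G2, mul_nonneg hk (show (0 : ℚ) ≤ N * N - 2 * N - 4 by nlinarith)]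
  exact le_of_mul_le_mul_left hfin (show (0 : ℚ) < N - 2 by linarith)

open Stmt15 in
/-- if `n > 65k + 3` and `Σ_C bal(C) ≤ k·n³`, then there are integers
`(λ_v)` and `β` such that `w*(uv) = w(uv) + λ_u + λ_v + β` vanishes on all but at most
`32k(n+1)` edges of `K_n`. -/
theorem stmt_15 (n : ℕ) (k : ℚ) (hk : 0 ≤ k) (hn : 65 * k + 3 < (n : ℚ))
    (w : Sym2 (Fin n) → ℤ)
    (hbal : (totalBal8 w : ℚ) ≤ 8 * (k * (n : ℚ) ^ 3)) :
    ∃ (lam : Fin n → ℤ) (β : ℤ) (S : Finset (Sym2 (Fin n))),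
      (S.card : ℚ) ≤ 32 * k * ((n : ℚ) + 1) ∧
      ∀ u v : Fin n, u ≠ v → s(u, v) ∉ S →
        w s(u, v) + lam u + lam v + β = 0 := by
  classical
  have hn3 : (3 : ℚ) < (n : ℚ) := by linarith
  have hn3' : 3 < n := by exact_mod_cast hn3
  have hn4 : 4 ≤ n := by omega
  -- choose a minimizing pair (a, b)
  have hne : (univ.offDiag : Finset (Fin n × Fin n)).Nonempty := by
    refine ⟨((⟨0, by omega⟩ : Fin n), (⟨1, by omega⟩ : Fin n)), ?_⟩
    simp [Finset.mem_offDiag, Fin.ext_iff]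
  obtain ⟨⟨a, b⟩, habmem, habmin⟩ := Finset.exists_min_image (univ.offDiag)
    (fun p => (n : ℤ) * S1 w p.1 p.2 + ((n : ℤ) - 2) * S2 w p.1 p.2) hne
  have hab : a ≠ b := (Finset.mem_offDiag.mp habmem).2.2
  -- the minimum bound
  have hsum_min : ((n * n - n : ℕ) : ℤ) * ((n : ℤ) * S1 w a b + ((n : ℤ) - 2) * S2 w a b)
      ≤ (2 * (n : ℤ) - 2) * totalBal8 w := by
    have h1 := Finset.card_nsmul_le_sum univ.offDiag
      (fun p => (n : ℤ) * S1 w p.1 p.2 + ((n : ℤ) - 2) * S2 w p.1 p.2)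
      ((n : ℤ) * S1 w a b + ((n : ℤ) - 2) * S2 w a b) habmin
    have hcard : (univ.offDiag : Finset (Fin n × Fin n)).card = n * n - n := by
      rw [Finset.offDiag_card, Finset.card_univ, Fintype.card_fin]
    have h2n : (0 : ℤ) ≤ (n : ℤ) - 2 := by
      have : (2 : ℤ) ≤ (n : ℤ) := by exact_mod_cast (by omega : 2 ≤ n)
      omega
    have h2 : ∑ p ∈ univ.offDiag, ((n : ℤ) * S1 w p.1 p.2 + ((n : ℤ) - 2) * S2 w p.1 p.2)
        ≤ ∑ p ∈ univ ×ˢ univ, ((n : ℤ) * S1 w p.1 p.2 + ((n : ℤ) - 2) * S2 w p.1 p.2) := by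
      refine Finset.sum_le_sum_of_subset_of_nonneg
        (fun p _ => Finset.mem_product.mpr ⟨Finset.mem_univ _, Finset.mem_univ _⟩) ?_
      intro p _ _
      exact add_nonneg (mul_nonneg (Int.natCast_nonneg n) (S1_nonneg w p.1 p.2))
        (mul_nonneg h2n (S2_nonneg w p.1 p.2))
    have h3 : ∑ p ∈ univ ×ˢ univ, ((n : ℤ) * S1 w p.1 p.2 + ((n : ℤ) - 2) * S2 w p.1 p.2)
        = (2 * (n : ℤ) - 2) * totalBal8 w := by
      rw [Finset.sum_product]
      simp only [Finset.sum_add_distrib, ← Finset.mul_sum]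
      rw [sum_S1, sum_S2]
      ring
    calc ((n * n - n : ℕ) : ℤ) * ((n : ℤ) * S1 w a b + ((n : ℤ) - 2) * S2 w a b)
        = (univ.offDiag : Finset (Fin n × Fin n)).card
            • ((n : ℤ) * S1 w a b + ((n : ℤ) - 2) * S2 w a b) := by
          rw [nsmul_eq_mul, hcard]
      _ ≤ ∑ p ∈ univ.offDiag, ((n : ℤ) * S1 w p.1 p.2 + ((n : ℤ) - 2) * S2 w p.1 p.2) := h1
      _ ≤ ∑ p ∈ univ ×ˢ univ, ((n : ℤ) * S1 w p.1 p.2 + ((n : ℤ) - 2) * S2 w p.1 p.2) := h2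
      _ = (2 * (n : ℤ) - 2) * totalBal8 w := h3
  -- majority value D
  set V' : Finset (Fin n) := univ \ {a, b} with hV'def
  set δ : Fin n → ℤ := fun x => w s(x, a) - w s(x, b) with hδdef
  have hV'card : V'.card = n - 2 := by
    rw [hV'def, Finset.card_sdiff_of_subset (Finset.subset_univ _), Finset.card_univ, Fintype.card_fin]
    rw [Finset.card_insert_of_notMem (by simpa using hab), Finset.card_singleton]
  have hV'ne : V'.Nonempty := Finset.card_pos.mp (by omega)
  obtain ⟨D, hDmem, hDmax⟩ := Finset.exists_max_image (V'.image δ)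
    (fun d => (V'.filter (fun x => δ x = d)).card) (hV'ne.image δ)
  set A : Finset (Fin n) := V'.filter (fun x => ¬ δ x = D) with hAdef
  have hVZ : (V'.card : ℤ) = (n : ℤ) - 2 := by rw [hV'card]; omega
  have hcount : ∀ x ∈ V', (A.card : ℤ) ≤ ∑ y ∈ V', |δ x - δ y| := by
    intro x hx
    have h1 : (V'.filter (fun y => δ y = δ x)).card ≤ (V'.filter (fun y => δ y = D)).card :=
      hDmax (δ x) (Finset.mem_image_of_mem δ hx)
    have h2 : (V'.filter (fun y => δ y = D)).card + (V'.filter (fun y => ¬ δ y = D)).card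
        = V'.card := Finset.card_filter_add_card_filter_not _
    have h3 : (V'.filter (fun y => δ y = δ x)).card + (V'.filter (fun y => ¬ δ y = δ x)).card
        = V'.card := Finset.card_filter_add_card_filter_not _
    have h4 : A.card ≤ (V'.filter (fun y => ¬ δ y = δ x)).card := by
      rw [hAdef]; omega
    calc (A.card : ℤ) ≤ ((V'.filter (fun y => ¬ δ y = δ x)).card : ℤ) := by exact_mod_cast h4
      _ = ∑ _y ∈ V'.filter (fun y => ¬ δ y = δ x), (1 : ℤ) := by simp
      _ ≤ ∑ y ∈ V'.filter (fun y => ¬ δ y = δ x), |δ x - δ y| :=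
          Finset.sum_le_sum fun y hy =>
            Int.one_le_abs (sub_ne_zero.mpr fun h => (Finset.mem_filter.mp hy).2 h.symm)
      _ ≤ ∑ y ∈ V', |δ x - δ y| :=
          Finset.sum_le_sum_of_subset_of_nonneg (Finset.filter_subset _ _)
            (fun _ _ _ => abs_nonneg _)
  have habs : ∀ x ∈ V', ∀ y ∈ V', |δ x - δ y| = t w a x y b := by
    intro x hx y hy
    have hx' : x ≠ a ∧ x ≠ b := by
      have := Finset.mem_sdiff.mp hx
      simp only [Finset.mem_insert, Finset.mem_singleton] at this
      exact ⟨fun h => this.2 (Or.inl h), fun h => this.2 (Or.inr h)⟩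
    have hy' : y ≠ a ∧ y ≠ b := by
      have := Finset.mem_sdiff.mp hy
      simp only [Finset.mem_insert, Finset.mem_singleton] at this
      exact ⟨fun h => this.2 (Or.inl h), fun h => this.2 (Or.inr h)⟩
    by_cases hxy : x = y
    · subst hxy
      simp [t_zero_of_eq23]
    · rw [t_of_ne w (fun h => hx'.1 h.symm) (fun h => hy'.1 h.symm) hab hxy hx'.2 hy'.2]
      have e1 : w s(x, a) = w s(a, x) := by rw [Sym2.eq_swap]
      have e2 : w s(y, a) = w s(a, y) := by rw [Sym2.eq_swap]
      simp only [hδdef]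
      rw [e1, e2]
      congr 1
      ring
  have hAbound : ((n : ℤ) - 2) * (A.card : ℤ) ≤ S1 w a b := by
    have hs : (V'.card : ℤ) * (A.card : ℤ) ≤ ∑ x ∈ V', ∑ y ∈ V', |δ x - δ y| := by
      calc (V'.card : ℤ) * (A.card : ℤ) = ∑ _x ∈ V', (A.card : ℤ) := by
            rw [Finset.sum_const, nsmul_eq_mul]
        _ ≤ _ := Finset.sum_le_sum hcount
    have heq : ∑ x ∈ V', ∑ y ∈ V', |δ x - δ y| = ∑ x ∈ V', ∑ y ∈ V', t w a x y b :=
      Finset.sum_congr rfl fun x hx => Finset.sum_congr rfl fun y hy => habs x hx y hy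
    have hle : ∑ x ∈ V', ∑ y ∈ V', t w a x y b ≤ S1 w a b := by
      unfold S1
      refine le_trans (Finset.sum_le_sum fun x _ =>
        Finset.sum_le_sum_of_subset_of_nonneg (Finset.subset_univ _)
          fun _ _ _ => t_nonneg w _ _ _ _) ?_
      exact Finset.sum_le_sum_of_subset_of_nonneg (Finset.subset_univ _)
        fun _ _ _ => Finset.sum_nonneg fun _ _ => t_nonneg w _ _ _ _
    rw [hVZ, heq] at hs
    exact le_trans hs hle
  -- exceptional sets
  set P : Finset (Fin n × Fin n) := univ.offDiag.filter
    (fun p => p.1 ≠ a ∧ p.1 ≠ b ∧ p.2 ≠ a ∧ p.2 ≠ b ∧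
      w s(p.1, p.2) + w s(a, b) - w s(p.1, a) - w s(p.2, b) ≠ 0) with hPdef
  set Sbad : Finset (Sym2 (Fin n)) := P.image (fun p => s(p.1, p.2)) with hSbdef
  set SA : Finset (Sym2 (Fin n)) := (A ×ˢ (univ : Finset (Fin n))).image
    (fun p => s(p.1, p.2)) with hSAdef
  have hPcard : (P.card : ℤ) ≤ S2 w a b := by
    have h1 : ∀ p ∈ P, (1 : ℤ) ≤ t w p.1 p.2 a b := by
      intro p hp
      rw [hPdef, Finset.mem_filter] at hp
      obtain ⟨hod, h1a, h1b, h2a, h2b, hne0⟩ := hp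
      have hpp : p.1 ≠ p.2 := (Finset.mem_offDiag.mp hod).2.2
      rw [t_of_ne w hpp h1a h1b h2a h2b hab]
      exact Int.one_le_abs hne0
    calc (P.card : ℤ) = ∑ _p ∈ P, (1 : ℤ) := by simp
      _ ≤ ∑ p ∈ P, t w p.1 p.2 a b := Finset.sum_le_sum h1
      _ ≤ ∑ p ∈ univ ×ˢ univ, t w p.1 p.2 a b :=
          Finset.sum_le_sum_of_subset_of_nonneg
            (fun p _ => Finset.mem_product.mpr ⟨Finset.mem_univ _, Finset.mem_univ _⟩)
            (fun p _ _ => t_nonneg w _ _ _ _)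
      _ = S2 w a b := by rw [Finset.sum_product]; rfl
  have hScard : (((Sbad ∪ SA).card : ℤ)) ≤ S2 w a b + (A.card : ℤ) * n := by
    have h1 : (Sbad ∪ SA).card ≤ Sbad.card + SA.card := Finset.card_union_le _ _
    have h2 : Sbad.card ≤ P.card := Finset.card_image_le
    have h3 : SA.card ≤ A.card * n := by
      calc SA.card ≤ (A ×ˢ (univ : Finset (Fin n))).card := Finset.card_image_le
        _ = A.card * n := by rw [Finset.card_product, Finset.card_univ, Fintype.card_fin]
    have h4 : ((Sbad ∪ SA).card : ℤ) ≤ (P.card : ℤ) + (A.card : ℤ) * (n : ℤ) := by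
      have := le_trans h1 (Nat.add_le_add h2 h3)
      exact_mod_cast this
    linarith [hPcard]
  refine ⟨fun u => if u = a then -D - w s(a, b) else -w s(u, a), D + w s(a, b),
    Sbad ∪ SA, ?_, ?_⟩
  · -- cardinality bound
    have hnQ : (4 : ℚ) ≤ (n : ℚ) := by exact_mod_cast hn4
    have f1 : ((n : ℚ) - 2) * ((A.card : ℚ)) ≤ ((S1 w a b : ℤ) : ℚ) := by exact_mod_cast hAbound
    have f2 : (((Sbad ∪ SA).card : ℚ)) ≤ ((S2 w a b : ℤ) : ℚ) + (A.card : ℚ) * (n : ℚ) := by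
      exact_mod_cast hScard
    have hnn : n ≤ n * n := Nat.le_mul_of_pos_left n (by omega)
    have f3 : ((n : ℚ) * n - n) * ((n : ℚ) * ((S1 w a b : ℤ) : ℚ)
        + ((n : ℚ) - 2) * ((S2 w a b : ℤ) : ℚ)) ≤ (2 * (n : ℚ) - 2) * ((totalBal8 w : ℤ) : ℚ) := by
      have hc : ((n * n - n : ℕ) : ℚ) = (n : ℚ) * n - n := by
        rw [Nat.cast_sub hnn]; push_cast; ring
      have f3' : ((n * n - n : ℕ) : ℚ) * ((n : ℚ) * ((S1 w a b : ℤ) : ℚ)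
          + ((n : ℚ) - 2) * ((S2 w a b : ℤ) : ℚ))
          ≤ (2 * (n : ℚ) - 2) * ((totalBal8 w : ℤ) : ℚ) := by exact_mod_cast hsum_min
      rwa [hc] at f3'
    have f5 : (0 : ℚ) ≤ ((S1 w a b : ℤ) : ℚ) := by exact_mod_cast S1_nonneg w a b
    have f6 : (0 : ℚ) ≤ ((S2 w a b : ℤ) : ℚ) := by exact_mod_cast S2_nonneg w a b
    have f7 : (0 : ℚ) ≤ (A.card : ℚ) := by positivity
    have hT0 : (0 : ℚ) ≤ ((totalBal8 w : ℤ) : ℚ) := by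
      have : (0 : ℤ) ≤ totalBal8 w := by
        rw [totalBal8_eq]
        exact Finset.sum_nonneg fun _ _ => Finset.sum_nonneg fun _ _ =>
          Finset.sum_nonneg fun _ _ => Finset.sum_nonneg fun _ _ => t_nonneg w _ _ _ _
      exact_mod_cast this
    exact stmt15_arith k (n : ℚ) _ _ _ _ _ hk hnQ f1 f2 f3 hbal f5 f6 f7
  · -- correctness
    intro u v huv hS
    beta_reduce
    have hSb' : s(u, v) ∉ Sbad := fun h => hS (Finset.mem_union_left _ h)
    have hSA' : s(u, v) ∉ SA := fun h => hS (Finset.mem_union_right _ h)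
    have hAu : u ∉ A := fun h =>
      hSA' (Finset.mem_image.mpr ⟨(u, v), Finset.mem_product.mpr ⟨h, mem_univ v⟩, rfl⟩)
    have hAv : v ∉ A := fun h =>
      hSA' (Finset.mem_image.mpr ⟨(v, u), Finset.mem_product.mpr ⟨h, mem_univ u⟩, Sym2.eq_swap⟩)
    have hδu : u ≠ a → u ≠ b → w s(u, a) - w s(u, b) = D := by
      intro h1 h2
      by_contra h
      exact hAu (Finset.mem_filter.mpr ⟨by simp [hV'def, h1, h2], h⟩)
    have hδv : v ≠ a → v ≠ b → w s(v, a) - w s(v, b) = D := by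
      intro h1 h2
      by_contra h
      exact hAv (Finset.mem_filter.mpr ⟨by simp [hV'def, h1, h2], h⟩)
    by_cases hua : u = a
    · have hva : v ≠ a := fun h => huv (hua.trans h.symm)
      rw [if_pos hua, if_neg hva]
      have h2 : w s(u, v) = w s(v, a) := by rw [hua, Sym2.eq_swap]
      linear_combination h2
    · by_cases hva : v = a
      · rw [if_neg hua, if_pos hva]
        have h2 : w s(u, v) = w s(u, a) := by rw [hva]
        linear_combination h2
      · by_cases hub : u = b
        · have hvb : v ≠ b := fun h => huv (h.symm ▸ hub)
          have hδv' := hδv hva hvb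
          rw [if_neg hua, if_neg hva]
          have h1 : w s(u, a) = w s(a, b) := by rw [hub, Sym2.eq_swap]
          have h2 : w s(u, v) = w s(v, b) := by rw [hub, Sym2.eq_swap]
          linear_combination h2 - h1 - hδv'
        · by_cases hvb : v = b
          · have hδu' := hδu hua hub
            rw [if_neg hua, if_neg hva]
            have h1 : w s(v, a) = w s(a, b) := by rw [hvb, Sym2.eq_swap]
            have h2 : w s(u, v) = w s(u, b) := by rw [hvb]
            linear_combination h2 - h1 - hδu'
          · have hexpr : w s(u, v) + w s(a, b) - w s(u, a) - w s(v, b) = 0 := by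
              by_contra h
              refine hSb' (Finset.mem_image.mpr ⟨(u, v), ?_, rfl⟩)
              rw [hPdef, Finset.mem_filter]
              exact ⟨Finset.mem_offDiag.mpr ⟨mem_univ _, mem_univ _, huv⟩, hua, hub, hva, hvb, h⟩
            have hδv' := hδv hva hvb
            rw [if_neg hua, if_neg hva]
            linear_combination hexpr - hδv'
end

section
/- Let G be a spanning subgraph of K_n and let X ⊆ V(K_n). Then G is an (X)-partial Hamilton cycle of K_n (i.e., G can be obtained from some Hamilton cycle of K_n by deleting all its edges having both endpoints outside X) if and only if: (a) G is a vertex-disjoint union of paths (allowing trivial single-vertex paths); (b) every vertex of X is an internal vertex of one of these paths; and (c) G contains no edge with both endpoints in V(K_n) ∖ X. (Assume |V(K_n) ∖ X| is large enough relative to the number of paths, e.g., n ≥ 2|X| + 3.) -/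
open Finset

/-- `G` is an `(X)`-partial Hamilton cycle of `K_n`: it is obtained from some Hamilton
cycle `H` by deleting all edges of `H` having both endpoints outside `X`. -/
def IsXPartial {n : ℕ} (X : Finset (Fin n)) (G : SimpleGraph (Fin n)) : Prop :=
  ∃ H : SimpleGraph (Fin n), IsHamCycle H ∧
    ∀ e : Sym2 (Fin n), e ∈ G.edgeSet ↔ (e ∈ H.edgeSet ∧ ∃ v ∈ e, v ∈ X)



namespace Stmt17Aux

open SimpleGraph Walk

variable {V : Type*}

/-- A set closed under adjacency absorbs reachability. -/
lemma mem_of_reachable {G : SimpleGraph V} {S : Set V}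
    (hS : ∀ a ∈ S, ∀ b, G.Adj a b → b ∈ S) :
    ∀ {u v : V}, G.Walk u v → u ∈ S → v ∈ S := by
  intro u v p
  induction p with
  | nil => exact id
  | cons h' p ih => exact fun hu => ih (hS _ hu _ h')

lemma concat_isPath {G : SimpleGraph V} {u v w : V} {p : G.Walk u v} (hp : p.IsPath)
    (h : G.Adj v w) (hw : w ∉ p.support) : (p.concat h).IsPath := by
  have h2 : (p.concat h).reverse.IsPath := by
    rw [reverse_concat, cons_isPath_iff]
    exact ⟨hp.reverse, by simpa using hw⟩
  simpa [concat_eq_append] using h2.reverse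

lemma cycle_two_nbrs [DecidableEq V] {G : SimpleGraph V} {v : V} {c : G.Walk v v}
    (hc : c.IsCycle) {u : V} (hu : u ∈ c.support) :
    ∃ a b, a ≠ b ∧ c.toSubgraph.Adj u a ∧ c.toSubgraph.Adj u b := by
  have hrot : (c.rotate u hu).toSubgraph = c.toSubgraph := toSubgraph_rotate c hu
  have hd := hc.rotate hu
  rw [← hrot]
  generalize (c.rotate u hu) = d at hd ⊢
  have hnn : ¬d.Nil := hd.not_nil
  obtain ⟨a, ha, q, rfl⟩ := not_nil_iff.mp hnn
  rw [cons_isCycle_iff] at hd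
  have hlen : 0 < q.reverse.length := by
    rw [length_reverse]
    cases q with
    | nil => exact absurd ha (G.irrefl)
    | cons h' q' => simp
  obtain ⟨b, hb, r, hqr⟩ := not_nil_iff.mp (not_nil_iff_lt_length.mpr hlen)
  have hsub : s(u, b) ∈ q.edges := by
    have h3 : s(u, b) ∈ q.reverse.edges := by rw [hqr]; simp
    rwa [edges_reverse, List.mem_reverse] at h3
  have hab : a ≠ b := by
    rintro rfl
    exact hd.2 hsub
  refine ⟨a, b, hab, ?_, ?_⟩
  · have h4 : s(u, a) ∈ (Walk.cons ha q).edges := by simp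
    exact (Subgraph.mem_edgeSet).mp ((mem_edges_toSubgraph _).mpr h4)
  · have h4 : s(u, b) ∈ (Walk.cons ha q).edges := by simp [hsub]
    exact (Subgraph.mem_edgeSet).mp ((mem_edges_toSubgraph _).mpr h4)


lemma exists_leaf [Fintype V] [DecidableEq V] {G : SimpleGraph V} (hac : G.IsAcyclic)
    (u : V) : ∃ w, G.Reachable u w ∧ (G.neighborSet w).ncard ≤ 1 := by
  by_contra hcon
  push_neg at hcon
  have hdeg : ∀ w, G.Reachable u w → 1 < (G.neighborSet w).ncard := fun w hw =>
    hcon w hw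
  have key : ∀ k, ∃ (w : V) (p : G.Walk u w), p.IsPath ∧ p.length = k := by
    intro k
    induction k with
    | zero => exact ⟨u, Walk.nil, Walk.IsPath.nil, rfl⟩
    | succ k ih =>
      obtain ⟨w, p, hp, hl⟩ := ih
      obtain ⟨a, b, ha', hb', hab⟩ :=
        (Set.one_lt_ncard_iff (Set.toFinite _)).mp (hdeg w p.reachable)
      have ha : G.Adj w a := ha'
      have hb : G.Adj w b := hb'
      by_cases hex : ∃ x ∈ G.neighborSet w, x ∉ p.support
      · obtain ⟨x, hx, hxs⟩ := hex
        exact ⟨x, p.concat hx, concat_isPath hp hx hxs, (length_concat p hx).trans (congrArg (· + 1) hl)⟩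
      · push_neg at hex
        exfalso
        -- all neighbors of w lie on p; build two distinct paths u → w
        have hmem : ∀ x, x ∈ G.neighborSet w → x ∈ p.support := hex
        have hPx : ∀ (x : V) (hx : G.Adj w x) (hxs : x ∈ p.support),
            ∃ P : G.Walk u w, P.IsPath ∧
              P.support = (p.takeUntil x hxs).support.concat w := by
          intro x hx hxs
          have hxw : x ≠ w := fun h => G.irrefl (h ▸ hx)
          have hwnot : w ∉ (p.takeUntil x hxs).support := by
            intro hwin
            have hspec := p.take_spec hxs
            have hnd : p.support.Nodup := hp.support_nodup
            rw [← hspec, support_append] at hnd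
            have hdrop : w ∈ (p.dropUntil x hxs).support.tail := by
              have hnn : 0 < (p.dropUntil x hxs).length := by
                rcases Nat.eq_zero_or_pos (p.dropUntil x hxs).length with h0 | h0
                · exact absurd (eq_of_length_eq_zero h0) hxw
                · exact h0
              obtain ⟨y, hy, r, hr⟩ := not_nil_iff.mp (not_nil_iff_lt_length.mpr hnn)
              rw [hr]
              simpa using r.end_mem_support
            exact (List.nodup_append'.mp hnd).2.2 hwin hdrop
          exact ⟨(p.takeUntil x hxs).concat hx.symm,
            concat_isPath (hp.takeUntil hxs) hx.symm hwnot, by rw [support_concat, List.concat_eq_append]⟩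
        obtain ⟨Pa, hPa, hsa⟩ := hPx a ha (hmem a ha')
        obtain ⟨Pb, hPb, hsb⟩ := hPx b hb (hmem b hb')
        have hne : Pa ≠ Pb := by
          intro h
          apply hab
          have hs : (p.takeUntil a (hmem a ha')).support.concat w
              = (p.takeUntil b (hmem b hb')).support.concat w := by
            rw [← hsa, ← hsb, h]
          have hs2 : (p.takeUntil a (hmem a ha')).support
              = (p.takeUntil b (hmem b hb')).support := by
            simpa [List.concat_eq_append] using hs
          have hla : (p.takeUntil a (hmem a ha')).support.getLast (by simp) = a :=
            Walk.getLast_support _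
          have hlb : (p.takeUntil b (hmem b hb')).support.getLast (by simp) = b :=
            Walk.getLast_support _
          rw [← hla, ← hlb]
          congr 1
        exact hne (Subtype.ext_iff.mp (hac.path_unique ⟨Pa, hPa⟩ ⟨Pb, hPb⟩))
  obtain ⟨w, p, hp, hl⟩ := key (Fintype.card V)
  exact absurd hl (by have := hp.length_lt; omega)


variable {V : Type*}

lemma ncard_eq_degree [Fintype V] {G : SimpleGraph V} [DecidableRel G.Adj] (v : V) :
    (G.neighborSet v).ncard = G.degree v := by
  rw [← card_neighborSet_eq_degree, Set.ncard_eq_toFinset_card', Set.toFinset_card]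

lemma connected_case [Fintype V] [DecidableEq V] {G : SimpleGraph V}
    (hn3 : 3 ≤ Fintype.card V) (X : Finset V) (hconn : G.Connected) (hac : G.IsAcyclic)
    (hd2 : ∀ v, (G.neighborSet v).ncard ≤ 2)
    (hdX : ∀ x ∈ X, (G.neighborSet x).ncard = 2) :
    ∃ H : SimpleGraph V, H.Connected ∧ (∀ v, (H.neighborSet v).ncard = 2) ∧ G ≤ H ∧
      ∀ a b, H.Adj a b → ¬G.Adj a b → a ∉ X ∧ b ∉ X := by
  classical
  letI : DecidableRel G.Adj := Classical.decRel _
  have hncd : ∀ v : V, (G.neighborSet v).ncard = G.degree v := fun v => ncard_eq_degree v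
  have htree : G.IsTree := ⟨hconn, hac⟩
  have hedge : G.edgeFinset.card + 1 = Fintype.card V := htree.card_edgeFinset
  have hsum : ∑ v, G.degree v = 2 * G.edgeFinset.card :=
    G.sum_degrees_eq_twice_card_edges
  have hge1 : ∀ v, 1 ≤ G.degree v := by
    intro v
    have hnt : Nontrivial V := Fintype.one_lt_card_iff_nontrivial.mp (by omega)
    obtain ⟨w, hw⟩ := exists_ne v
    obtain ⟨p⟩ := hconn.preconnected v w
    cases p with
    | nil => exact absurd rfl hw
    | cons h q => exact (G.degree_pos_iff_exists_adj _).mpr ⟨_, h⟩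
  have hle2 : ∀ v, G.degree v ≤ 2 := fun v => (hncd v) ▸ hd2 v
  set A := univ.filter (fun v => G.degree v = 1) with hA
  have hAcard : A.card = 2 := by
    have hsplit := Finset.sum_filter_add_sum_filter_not univ (fun v => G.degree v = 1)
      (fun v => G.degree v)
    have h1 : ∑ v ∈ A, G.degree v = A.card := by
      rw [Finset.sum_congr rfl (fun v hv => (mem_filter.mp hv).2)]
      simp [hA]
    have h2 : ∑ v ∈ univ.filter (fun v => ¬G.degree v = 1), G.degree v
        = 2 * (univ.filter (fun v => ¬G.degree v = 1)).card := by
      rw [Finset.sum_congr rfl (fun v hv => ?_), Finset.sum_const, smul_eq_mul, mul_comm]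
      have hv1 := (mem_filter.mp hv).2
      have := hge1 v; have := hle2 v; omega
    have hcards : A.card + (univ.filter (fun v => ¬G.degree v = 1)).card = Fintype.card V := by
      rw [hA, Finset.card_filter_add_card_filter_not, card_univ]
    rw [← hA] at hsplit
    omega
  obtain ⟨u, v, huv, hAuv⟩ := Finset.card_eq_two.mp hAcard
  have hmemA : ∀ w, w ∈ A ↔ G.degree w = 1 := fun w => by simp [hA]
  have hdu : G.degree u = 1 := (hmemA u).mp (by rw [hAuv]; simp)
  have hdv : G.degree v = 1 := (hmemA v).mp (by rw [hAuv]; simp)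
  have hdeg2 : ∀ w, w ≠ u → w ≠ v → G.degree w = 2 := by
    intro w hwu hwv
    have hnA : w ∉ A := by rw [hAuv]; simp [hwu, hwv]
    rw [hmemA] at hnA
    have := hge1 w; have := hle2 w; omega
  have hXu : u ∉ X := fun h => by have := hdX u h; rw [hncd] at this; omega
  have hXv : v ∉ X := fun h => by have := hdX v h; rw [hncd] at this; omega
  have hnadj : ¬G.Adj u v := by
    intro hadj
    have hclosed : ∀ a ∈ ({u, v} : Set V), ∀ b, G.Adj a b → b ∈ ({u, v} : Set V) := by
      rintro a ha b hab
      rcases ha with rfl | rfl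
      · have h1 : (G.neighborSet a).ncard = 1 := by rw [hncd]; exact hdu
        obtain ⟨x, hx⟩ := Set.ncard_eq_one.mp h1
        have hvx : v ∈ G.neighborSet a := hadj
        have hbx : b ∈ G.neighborSet a := hab
        rw [hx] at hvx hbx
        right
        rw [Set.mem_singleton_iff] at hvx hbx
        rw [hbx, hvx]
        rfl
      · have h1 : (G.neighborSet a).ncard = 1 := by rw [hncd]; exact hdv
        obtain ⟨x, hx⟩ := Set.ncard_eq_one.mp h1
        have hvx : u ∈ G.neighborSet a := hadj.symm
        have hbx : b ∈ G.neighborSet a := hab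
        rw [hx] at hvx hbx
        rw [Set.mem_singleton_iff] at hvx hbx
        left
        rw [hbx, hvx]
    have hall : ∀ w, w ∈ ({u, v} : Set V) := fun w => by
      obtain ⟨p⟩ := hconn.preconnected u w
      exact mem_of_reachable hclosed p (by left; rfl)
    have hsub : (univ : Finset V) ⊆ {u, v} := fun w _ => by
      have := hall w
      simpa using this
    have hcard := Finset.card_le_card hsub
    rw [card_univ] at hcard
    have : ({u, v} : Finset V).card ≤ 2 := Finset.card_insert_le _ _ |>.trans (by simp)
    omega
  have hadj' : ∀ a b, (G ⊔ edge u v).Adj a b ↔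
      G.Adj a b ∨ (a = u ∧ b = v) ∨ (a = v ∧ b = u) := by
    intro a b
    rw [sup_adj, edge_adj]
    constructor
    · rintro (h | ⟨(⟨rfl, rfl⟩ | ⟨rfl, rfl⟩), hne⟩) <;> tauto
    · rintro (h | ⟨rfl, rfl⟩ | ⟨rfl, rfl⟩)
      · left; exact h
      · exact Or.inr ⟨Or.inl ⟨rfl, rfl⟩, huv⟩
      · exact Or.inr ⟨Or.inr ⟨rfl, rfl⟩, huv.symm⟩
  refine ⟨G ⊔ edge u v, Connected.mono le_sup_left hconn, ?_, le_sup_left, ?_⟩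
  · intro w
    rcases eq_or_ne w u with hwu | hwu
    · rw [hwu]
      have hset : (G ⊔ edge u v).neighborSet u = insert v (G.neighborSet u) := by
        ext y
        rw [Set.mem_insert_iff, mem_neighborSet, mem_neighborSet, hadj']
        constructor
        · rintro (h | ⟨-, rfl⟩ | ⟨rfl, rfl⟩)
          · right; exact h
          · left; rfl
          · exact absurd rfl huv
        · rintro (rfl | h)
          · right; left; exact ⟨rfl, rfl⟩
          · left; exact h
      have hvnm : v ∉ G.neighborSet u := fun h => hnadj h
      rw [hset, Set.ncard_insert_of_notMem hvnm (Set.toFinite _), hncd, hdu]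
    · rcases eq_or_ne w v with hwv | hwv
      · rw [hwv]
        have hset : (G ⊔ edge u v).neighborSet v = insert u (G.neighborSet v) := by
          ext y
          rw [Set.mem_insert_iff, mem_neighborSet, mem_neighborSet, hadj']
          constructor
          · rintro (h | ⟨rfl, rfl⟩ | ⟨-, rfl⟩)
            · right; exact h
            · exact absurd rfl huv
            · left; rfl
          · rintro (rfl | h)
            · right; right; exact ⟨rfl, rfl⟩
            · left; exact h
        have hnadj' : u ∉ G.neighborSet v := fun h => hnadj (G.adj_symm h)
        rw [hset, Set.ncard_insert_of_notMem hnadj' (Set.toFinite _), hncd, hdv]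
      · have hset : (G ⊔ edge u v).neighborSet w = G.neighborSet w := by
          ext y
          rw [mem_neighborSet, mem_neighborSet, hadj']
          constructor
          · rintro (h | ⟨rfl, rfl⟩ | ⟨rfl, rfl⟩)
            · exact h
            · exact absurd rfl hwu
            · exact absurd rfl hwv
          · exact fun h => Or.inl h
        rw [hset, hncd, hdeg2 w hwu hwv]
  · intro a b hab hnab
    rcases (hadj' a b).mp hab with h | ⟨rfl, rfl⟩ | ⟨rfl, rfl⟩
    · exact absurd h hnab
    · exact ⟨hXu, hXv⟩
    · exact ⟨hXv, hXu⟩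

lemma extend_lemma [Fintype V] [DecidableEq V] (hn3 : 3 ≤ Fintype.card V) (X : Finset V) :
    ∀ (k : ℕ) (G : SimpleGraph V), (Set.toFinite Gᶜ.edgeSet).toFinset.card ≤ k →
      G.IsAcyclic → (∀ v, (G.neighborSet v).ncard ≤ 2) →
      (∀ x ∈ X, (G.neighborSet x).ncard = 2) →
      ∃ H : SimpleGraph V, H.Connected ∧ (∀ v, (H.neighborSet v).ncard = 2) ∧ G ≤ H ∧
        ∀ a b, H.Adj a b → ¬G.Adj a b → a ∉ X ∧ b ∉ X := by
  intro k
  induction k with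
  | zero =>
    intro G hk hac hd2 hdX
    have hconn : G.Connected := by
      have hempty : Gᶜ.edgeSet = ∅ := by
        have h0 := Finset.card_eq_zero.mp (Nat.le_zero.mp hk)
        rwa [Set.Finite.toFinset_eq_empty] at h0
      have hbot : Gᶜ = ⊥ := edgeSet_eq_empty.mp hempty
      have hGtop : G = ⊤ := by
        ext a b
        rw [top_adj]
        constructor
        · exact fun h => h.ne
        · intro hab
          by_contra hno
          have hcadj : Gᶜ.Adj a b := ⟨hab, hno⟩
          rw [hbot] at hcadj
          exact hcadj
      have hnev : Nonempty V := Fintype.card_pos_iff.mp (by omega)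
      rw [hGtop, connected_iff _]
      refine ⟨fun a b => ?_, hnev⟩
      rcases eq_or_ne a b with rfl | hab
      · exact Reachable.refl a
      · exact ((top_adj a b).mpr hab).reachable
    exact connected_case hn3 X hconn hac hd2 hdX
  | succ k ih =>
    intro G hk hac hd2 hdX
    by_cases hconn : G.Connected
    · exact connected_case hn3 X hconn hac hd2 hdX
    · have hnev : Nonempty V := Fintype.card_pos_iff.mp (by omega)
      have hpre : ¬G.Preconnected := fun h => hconn ((connected_iff _).mpr ⟨h, hnev⟩)
      obtain ⟨u0, v0, hnr⟩ : ∃ u v, ¬G.Reachable u v := by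
        by_contra h
        push_neg at h
        exact hpre fun u v => h u v
      obtain ⟨u', hru, hdu'⟩ := exists_leaf hac u0
      obtain ⟨v', hrv, hdv'⟩ := exists_leaf hac v0
      have hnr' : ¬G.Reachable u' v' := fun h => hnr (hru.trans (h.trans hrv.symm))
      have hne' : u' ≠ v' := fun h => hnr' (h ▸ Reachable.refl u')
      have hnadj : ¬G.Adj u' v' := fun h => hnr' h.reachable
      have hXu' : u' ∉ X := fun h => by have := hdX u' h; omega
      have hXv' : v' ∉ X := fun h => by have := hdX v' h; omega
      set G' := G ⊔ edge u' v' with hG'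
      have hadj' : ∀ a b, G'.Adj a b ↔
          G.Adj a b ∨ (a = u' ∧ b = v') ∨ (a = v' ∧ b = u') := by
        intro a b
        rw [hG', sup_adj, edge_adj]
        constructor
        · rintro (h | ⟨(⟨rfl, rfl⟩ | ⟨rfl, rfl⟩), hne2⟩) <;> tauto
        · rintro (h | ⟨rfl, rfl⟩ | ⟨rfl, rfl⟩)
          · exact Or.inl h
          · exact Or.inr ⟨Or.inl ⟨rfl, rfl⟩, hne'⟩
          · exact Or.inr ⟨Or.inr ⟨rfl, rfl⟩, hne'.symm⟩
      have hGle : G ≤ G' := le_sup_left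
      have hbridge : G'.IsBridge s(u', v') := by
        rw [isBridge_iff]
        show ¬ (G' \ fromEdgeSet {s(u', v')}).Reachable u' v'
        have hdel : G' \ fromEdgeSet {s(u', v')} = G := by
          ext a b
          rw [sdiff_adj, hadj', fromEdgeSet_adj]
          constructor
          · rintro ⟨h | ⟨rfl, rfl⟩ | ⟨rfl, rfl⟩, h2⟩
            · exact h
            · exact absurd ⟨rfl, hne'⟩ h2
            · exact absurd ⟨by rw [Set.mem_singleton_iff, Sym2.eq_swap], hne'.symm⟩ h2
          · intro h
            refine ⟨Or.inl h, ?_⟩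
            rintro ⟨hmem, -⟩
            rw [Set.mem_singleton_iff, Sym2.eq_iff] at hmem
            rcases hmem with ⟨rfl, rfl⟩ | ⟨rfl, rfl⟩
            · exact hnadj h
            · exact hnadj h.symm
        rw [hdel]
        exact hnr'
      have hac' : G'.IsAcyclic := by
        intro w c hc
        have hnotmem : s(u', v') ∉ c.edges :=
          hbridge.notMem_edges_of_isCycle hc
        have hsubs : ∀ e ∈ c.edges, e ∈ G.edgeSet := by
          intro e he
          have h1 : e ∈ G'.edgeSet := c.edges_subset_edgeSet he
          rw [hG', edgeSet_sup, edge_edgeSet_of_ne hne'] at h1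
          rcases h1 with h1 | h1
          · exact h1
          · rw [Set.mem_singleton_iff] at h1
            exact absurd (h1 ▸ he) hnotmem
        exact hac (c.transfer G hsubs) (hc.transfer hsubs)
      have hnbu : G'.neighborSet u' = insert v' (G.neighborSet u') := by
        ext y
        rw [Set.mem_insert_iff, mem_neighborSet, mem_neighborSet, hadj']
        constructor
        · rintro (h | ⟨-, rfl⟩ | ⟨rfl, rfl⟩)
          · right; exact h
          · left; rfl
          · exact absurd rfl hne'
        · rintro (rfl | h)
          · right; left; exact ⟨rfl, rfl⟩
          · left; exact h
      have hnbv : G'.neighborSet v' = insert u' (G.neighborSet v') := by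
        ext y
        rw [Set.mem_insert_iff, mem_neighborSet, mem_neighborSet, hadj']
        constructor
        · rintro (h | ⟨rfl, rfl⟩ | ⟨-, rfl⟩)
          · right; exact h
          · exact absurd rfl hne'
          · left; rfl
        · rintro (rfl | h)
          · right; right; exact ⟨rfl, rfl⟩
          · left; exact h
      have hnbw : ∀ w, w ≠ u' → w ≠ v' → G'.neighborSet w = G.neighborSet w := by
        intro w hwu hwv
        ext y
        rw [mem_neighborSet, mem_neighborSet, hadj']
        constructor
        · rintro (h | ⟨rfl, rfl⟩ | ⟨rfl, rfl⟩)
          · exact h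
          · exact absurd rfl hwu
          · exact absurd rfl hwv
        · exact fun h => Or.inl h
      have hd2' : ∀ w, (G'.neighborSet w).ncard ≤ 2 := by
        intro w
        rcases eq_or_ne w u' with hwu | hwu
        · rw [hwu, hnbu]
          exact le_trans (Set.ncard_insert_le _ _) (by omega)
        · rcases eq_or_ne w v' with hwv | hwv
          · rw [hwv, hnbv]
            exact le_trans (Set.ncard_insert_le _ _) (by omega)
          · rw [hnbw w hwu hwv]
            exact hd2 w
      have hdX' : ∀ x ∈ X, (G'.neighborSet x).ncard = 2 := by
        intro x hx
        have hxu : x ≠ u' := fun h => hXu' (h ▸ hx)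
        have hxv : x ≠ v' := fun h => hXv' (h ▸ hx)
        rw [hnbw x hxu hxv]
        exact hdX x hx
      have hmlt : (Set.toFinite G'ᶜ.edgeSet).toFinset.card
          < (Set.toFinite Gᶜ.edgeSet).toFinset.card := by
        apply Finset.card_lt_card
        have hsub : (Set.toFinite G'ᶜ.edgeSet).toFinset ⊆ (Set.toFinite Gᶜ.edgeSet).toFinset := by
          intro e he
          rw [Set.Finite.mem_toFinset] at he ⊢
          induction e using Sym2.ind with
          | _ a b =>
            rw [SimpleGraph.mem_edgeSet, compl_adj] at he ⊢
            exact ⟨he.1, fun h => he.2 (hGle h)⟩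
        rw [Finset.ssubset_iff_of_subset hsub]
        refine ⟨s(u', v'), ?_, ?_⟩
        · rw [Set.Finite.mem_toFinset, SimpleGraph.mem_edgeSet, compl_adj]
          exact ⟨hne', hnadj⟩
        · rw [Set.Finite.mem_toFinset, SimpleGraph.mem_edgeSet, compl_adj]
          exact fun h => h.2 ((hadj' _ _).mpr (Or.inr (Or.inl ⟨rfl, rfl⟩)))
      obtain ⟨H, hHconn, hHdeg, hleH, hextra⟩ := ih G' (by omega) hac' hd2' hdX'
      refine ⟨H, hHconn, hHdeg, le_trans hGle hleH, ?_⟩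
      intro a b hab hnab
      by_cases hG'ab : G'.Adj a b
      · rcases (hadj' a b).mp hG'ab with h | ⟨rfl, rfl⟩ | ⟨rfl, rfl⟩
        · exact absurd h hnab
        · exact ⟨hXu', hXv'⟩
        · exact ⟨hXv', hXu'⟩
      · exact hextra a b hab hG'ab

end Stmt17Aux

open SimpleGraph Walk

/-- `G` is an `(X)`-partial Hamilton cycle iff (a) `G` is a disjoint union
of paths, (b) every vertex of `X` is an internal vertex (degree 2) of one of them, and
(c) `G` has no edge with both endpoints outside `X` (assuming `n ≥ 2|X| + 3`). -/
theorem stmt_17 (n : ℕ) (X : Finset (Fin n)) (hn : 2 * X.card + 3 ≤ n)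
    (G : SimpleGraph (Fin n)) :
    IsXPartial X G ↔
      (G.IsAcyclic ∧ ∀ v, (G.neighborSet v).ncard ≤ 2) ∧
      (∀ x ∈ X, (G.neighborSet x).ncard = 2) ∧
      (∀ e ∈ G.edgeSet, ∃ v ∈ e, v ∈ X) := by
  constructor
  · rintro ⟨H, ⟨hHconn, hHdeg⟩, hiff⟩
    have hle : G ≤ H := by
      intro a b hab
      rw [← SimpleGraph.mem_edgeSet]
      exact ((hiff s(a, b)).mp ((mem_edgeSet G).mpr hab)).1
    have htouch : ∀ e ∈ G.edgeSet, ∃ v ∈ e, v ∈ X := fun e he => ((hiff e).mp he).2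
    have hd2 : ∀ v, (G.neighborSet v).ncard ≤ 2 := by
      intro v
      have hsub : G.neighborSet v ⊆ H.neighborSet v := fun y hy => hle hy
      exact le_trans (Set.ncard_le_ncard hsub (Set.toFinite _)) (le_of_eq (hHdeg v))
    have hdX : ∀ x ∈ X, (G.neighborSet x).ncard = 2 := by
      intro x hx
      have hset : G.neighborSet x = H.neighborSet x := by
        ext y
        constructor
        · exact fun hy => hle hy
        · intro hy
          have : s(x, y) ∈ G.edgeSet :=
            (hiff s(x, y)).mpr ⟨(mem_edgeSet H).mpr hy, x, Sym2.mem_mk_left x y, hx⟩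
          exact (mem_edgeSet G).mp this
      rw [hset]
      exact hHdeg x
    have hac : G.IsAcyclic := by
      intro v c hc
      set c' := c.mapLe hle with hc'def
      have hc' : c'.IsCycle := (mapLe_isCycle hle).mpr hc
      have hclosed : ∀ a ∈ {w | w ∈ c'.support}, ∀ b, H.Adj a b →
          b ∈ {w | w ∈ c'.support} := by
        intro a ha b hadj
        obtain ⟨x, y, hxy, hax, hay⟩ := Stmt17Aux.cycle_two_nbrs hc' ha
        have hpair : ({x, y} : Set (Fin n)) ⊆ H.neighborSet a := by
          rintro z (rfl | rfl)
          · exact hax.adj_sub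
          · exact hay.adj_sub
        have hset2 : ({x, y} : Set (Fin n)) = H.neighborSet a :=
          Set.eq_of_subset_of_ncard_le hpair
            (by rw [hHdeg a, Set.ncard_pair hxy]) (Set.toFinite _)
        have hb : b ∈ ({x, y} : Set (Fin n)) := by
          rw [hset2]; exact hadj
        rcases hb with rfl | rfl
        · exact (mem_verts_toSubgraph c').mp hax.snd_mem
        · exact (mem_verts_toSubgraph c').mp hay.snd_mem
      have hall : ∀ w, w ∈ c'.support := by
        intro w
        obtain ⟨p⟩ := hHconn.preconnected v w
        exact Stmt17Aux.mem_of_reachable hclosed p c'.start_mem_support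
      obtain ⟨a, ha, q, hq⟩ := not_nil_iff.mp hc'.not_nil
      have htail : ∀ w, w ∈ c'.support.tail := by
        intro w
        rcases eq_or_ne w v with rfl | hw
        · rw [hq]
          simp only [support_cons, List.tail_cons]
          exact q.end_mem_support
        · have h1 := hall w
          rw [support_eq_cons] at h1
          rcases List.mem_cons.mp h1 with h2 | h2
          · exact absurd h2 hw
          · exact h2
      have hnodup : c'.support.tail.Nodup := hc'.support_nodup
      have hlen1 : n ≤ c'.support.tail.length := by
        have hsub : (Finset.univ : Finset (Fin n)) ⊆ c'.support.tail.toFinset :=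
          fun w _ => List.mem_toFinset.mpr (htail w)
        have h3 := Finset.card_le_card hsub
        rw [Finset.card_univ, Fintype.card_fin] at h3
        exact le_trans h3 c'.support.tail.toFinset_card_le
      have hlen : n ≤ c'.length := by
        have h4 := length_support c'
        have h5 : c'.support.tail.length = c'.support.length - 1 := by
          rw [List.length_tail]
        omega
      have hedges : c'.length ≤ c'.edges.toFinset.card := by
        rw [List.toFinset_card_of_nodup hc'.edges_nodup, length_edges]
      have hec : c'.edges = c.edges := by
        rw [hc'def]
        simp only [Walk.mapLe, Walk.edges_map]
        have hid : ⇑(Hom.ofLE hle) = id := rfl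
        rw [hid, Sym2.map_id, List.map_id]
      have hsubE : c'.edges.toFinset ⊆ X.biUnion
          (fun x => ((Set.toFinite (G.neighborSet x)).toFinset.image (fun y => s(x, y)))) := by
        intro e he
        rw [List.mem_toFinset, hec] at he
        have heG : e ∈ G.edgeSet := c.edges_subset_edgeSet he
        obtain ⟨x, hxe, hxX⟩ := htouch e heG
        rw [Finset.mem_biUnion]
        refine ⟨x, hxX, ?_⟩
        obtain ⟨y, rfl⟩ := Sym2.mem_iff_exists.mp hxe
        rw [Finset.mem_image]
        refine ⟨y, ?_, rfl⟩
        rw [Set.Finite.mem_toFinset]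
        exact (mem_edgeSet G).mp heG
      have hcard2 : (X.biUnion
          (fun x => ((Set.toFinite (G.neighborSet x)).toFinset.image (fun y => s(x, y))))).card
          ≤ 2 * X.card := by
        refine le_trans Finset.card_biUnion_le ?_
        calc ∑ x ∈ X, ((Set.toFinite (G.neighborSet x)).toFinset.image (fun y => s(x, y))).card
            ≤ ∑ _x ∈ X, 2 := by
              refine Finset.sum_le_sum fun x _ => ?_
              refine le_trans Finset.card_image_le ?_
              rw [← Set.ncard_eq_toFinset_card _ (Set.toFinite _)]
              exact hd2 x
          _ = 2 * X.card := by rw [Finset.sum_const, smul_eq_mul, mul_comm]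
      have hfin := Finset.card_le_card hsubE
      omega
    exact ⟨⟨hac, hd2⟩, hdX, htouch⟩
  · rintro ⟨⟨hac, hd2⟩, hdX, htouch⟩
    have hn3 : 3 ≤ Fintype.card (Fin n) := by rw [Fintype.card_fin]; omega
    obtain ⟨H, hHconn, hHdeg, hle, hextra⟩ :=
      Stmt17Aux.extend_lemma hn3 X _ G le_rfl hac hd2 hdX
    refine ⟨H, ⟨hHconn, hHdeg⟩, ?_⟩
    intro e
    induction e using Sym2.ind with
    | _ a b =>
      rw [mem_edgeSet _, mem_edgeSet _]
      constructor
      · intro hab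
        exact ⟨hle hab, htouch s(a, b) ((mem_edgeSet G).mpr hab)⟩
      · rintro ⟨hab, x, hxe, hxX⟩
        by_contra hno
        have h6 := hextra a b hab hno
        rcases Sym2.mem_iff.mp hxe with rfl | rfl
        · exact h6.1 hxX
        · exact h6.2 hxX
end

section
/- Let w be an integer edge weighting of K_n such that every 4-cycle of K_n is balanced (w(x_1x_2)+w(x_3x_4) = w(x_2x_3)+w(x_4x_1) for every 4-cycle x_1x_2x_3x_4x_1). Then there exist rationals (λ_v)_{v ∈ V(K_n)} (integers if n ≥ 5, or half-integers) such that w(uv) = λ_u + λ_v for all edges uv; consequently all Hamilton cycles of K_n have the same weight 2Σ_v λ_v. -/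
open Finset

/-- if every 4-cycle of `K_n` (`n ≥ 5`) is balanced, then `w` decomposes via
vertex potentials: `w(uv) = λ_u + λ_v` for rationals `λ_v`; consequently every Hamilton
cycle has the same weight `2·Σ_v λ_v`. -/
theorem stmt_19 (n : ℕ) (hn : 5 ≤ n) (w : Sym2 (Fin n) → ℤ)
    (hbal : ∀ v1 v2 v3 v4 : Fin n, List.Pairwise (· ≠ ·) [v1, v2, v3, v4] →
      w s(v1, v2) + w s(v3, v4) = w s(v2, v3) + w s(v4, v1)) :
    ∃ lam : Fin n → ℚ,
      (∀ u v : Fin n, u ≠ v → (w s(u, v) : ℚ) = lam u + lam v) ∧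
      ∀ H : SimpleGraph (Fin n), IsHamCycle H → (wt w H : ℚ) = 2 * ∑ v, lam v := by
  classical
  set a : Fin n := ⟨0, by omega⟩ with ha_def
  set b : Fin n := ⟨1, by omega⟩ with hb_def
  set c : Fin n := ⟨2, by omega⟩ with hc_def
  have hab : a ≠ b := by simp [ha_def, hb_def, Fin.ext_iff]
  have hac : a ≠ c := by simp [ha_def, hc_def, Fin.ext_iff]
  have hbc : b ≠ c := by simp [hb_def, hc_def, Fin.ext_iff]
  -- balance condition in convenient form
  have hb4 : ∀ x y z t : Fin n, x ≠ y → x ≠ z → x ≠ t → y ≠ z → y ≠ t → z ≠ t →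
      w s(x, y) + w s(z, t) = w s(y, z) + w s(t, x) := by
    intro x y z t h1 h2 h3 h4 h5 h6
    exact hbal x y z t (by simp [h1, h2, h3, h4, h5, h6])
  have hsymm : ∀ x y : Fin n, w s(x, y) = w s(y, x) := fun x y => by rw [Sym2.eq_swap]
  set lam : Fin n → ℚ := fun v =>
    if v = a then ((w s(a, b) : ℚ) + w s(a, c) - w s(b, c)) / 2
    else if v = b then ((w s(a, b) : ℚ) + w s(b, c) - w s(a, c)) / 2
    else ((w s(v, a) : ℚ) + w s(v, b) - w s(a, b)) / 2 with hlam_def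
  have lam_a : lam a = ((w s(a, b) : ℚ) + w s(a, c) - w s(b, c)) / 2 := by
    simp [hlam_def]
  have lam_b : lam b = ((w s(a, b) : ℚ) + w s(b, c) - w s(a, c)) / 2 := by
    simp [hlam_def, hab.symm]
  have lam_v : ∀ v, v ≠ a → v ≠ b → lam v = ((w s(v, a) : ℚ) + w s(v, b) - w s(a, b)) / 2 := by
    intro v h1 h2; simp [hlam_def, h1, h2]
  -- key decomposition
  have hsymmQ : ∀ x y : Fin n, (w s(x, y) : ℚ) = w s(y, x) := fun x y => by
    rw [Sym2.eq_swap]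
  have hb4Q : ∀ x y z t : Fin n, x ≠ y → x ≠ z → x ≠ t → y ≠ z → y ≠ t → z ≠ t →
      (w s(x, y) : ℚ) + w s(z, t) = w s(y, z) + w s(t, x) := by
    intro x y z t h1 h2 h3 h4 h5 h6
    exact_mod_cast hb4 x y z t h1 h2 h3 h4 h5 h6
  have key : ∀ u v : Fin n, u ≠ v → (w s(u, v) : ℚ) = lam u + lam v := by
    have keya : ∀ v, v ≠ a → v ≠ b → (w s(a, v) : ℚ) = lam a + lam v := by
      intro v hva hvb
      rw [lam_a, lam_v v hva hvb]
      rcases eq_or_ne v c with rfl | hvc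
      · have e1 := hsymmQ c a
        have e2 := hsymmQ c b
        linarith
      · have h := hb4Q a v b c hva.symm hab hac hvb hvc hbc
        have e1 := hsymmQ v a
        have e2 := hsymmQ c a
        linarith
    have keyb : ∀ v, v ≠ a → v ≠ b → (w s(b, v) : ℚ) = lam b + lam v := by
      intro v hva hvb
      rw [lam_b, lam_v v hva hvb]
      rcases eq_or_ne v c with rfl | hvc
      · have e1 := hsymmQ c b
        have e2 := hsymmQ c a
        linarith
      · have h := hb4Q b v a c hvb.symm hab.symm hbc hva hvc hac
        have e1 := hsymmQ v b
        have e2 := hsymmQ c b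
        linarith
    have keyab : (w s(a, b) : ℚ) = lam a + lam b := by
      rw [lam_a, lam_b]; ring
    intro u v huv
    rcases eq_or_ne u a with rfl | hua
    · rcases eq_or_ne v b with rfl | hvb
      · exact keyab
      · exact keya v (Ne.symm huv) hvb
    rcases eq_or_ne u b with rfl | hub
    · rcases eq_or_ne v a with rfl | hva
      · rw [hsymmQ b a, keyab]; exact add_comm _ _
      · exact keyb v hva (Ne.symm huv)
    rcases eq_or_ne v a with rfl | hva
    · rw [hsymmQ u a, keya u hua hub]; exact add_comm _ _
    rcases eq_or_ne v b with rfl | hvb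
    · rw [hsymmQ u b, keyb u hua hub]; exact add_comm _ _
    · rw [lam_v u hua hub, lam_v v hva hvb]
      have hcross := hb4Q u a v b hua huv hub hva.symm hab hvb
      have hcyc := hb4Q u v a b huv hua hub hva hvb hab
      have e1 := hsymmQ a v
      have e2 := hsymmQ b u
      linarith
  refine ⟨lam, key, ?_⟩
  rintro H ⟨-, hdeg⟩
  have : DecidableRel H.Adj := Classical.decRel _
  -- degrees are all 2
  have hdeg2 : ∀ v, H.degree v = 2 := by
    intro v
    rw [← hdeg v, SimpleGraph.degree, SimpleGraph.neighborFinset,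
      Set.ncard_eq_toFinset_card']
  -- the weight finset is the edge finset
  have hfin : (Set.toFinite H.edgeSet).toFinset = H.edgeFinset := by
    ext e
    rw [Set.Finite.mem_toFinset, SimpleGraph.mem_edgeFinset]
  have hwt : (wt w H : ℚ) = ∑ e ∈ H.edgeFinset, (w e : ℚ) := by
    rw [wt, hfin]; push_cast; rfl
  rw [hwt]
  -- replace weights by lam-sums on edges
  have hstep : ∑ e ∈ H.edgeFinset, (w e : ℚ)
      = ∑ e ∈ H.edgeFinset, Sym2.lift ⟨fun x y => lam x + lam y, fun x y => add_comm _ _⟩ e := by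
    refine Finset.sum_congr rfl fun e he => ?_
    rw [SimpleGraph.mem_edgeFinset] at he
    induction e with
    | _ x y =>
      have hxy : x ≠ y := (H.mem_edgeSet.mp he).ne
      simpa using key x y hxy
  rw [hstep]
  -- dart double counting
  have h1 : ∑ d : H.Dart, lam d.fst
      = ∑ e ∈ H.edgeFinset, Sym2.lift ⟨fun x y => lam x + lam y, fun x y => add_comm _ _⟩ e := by
    rw [← Finset.sum_fiberwise_of_maps_to (s := (univ : Finset H.Dart)) (t := H.edgeFinset)
      (g := SimpleGraph.Dart.edge) (f := fun d => lam d.fst)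
      (fun d _ => by rw [SimpleGraph.mem_edgeFinset]; exact d.edge_mem)]
    refine Finset.sum_congr rfl fun e he => ?_
    rw [SimpleGraph.mem_edgeFinset] at he
    induction e with
    | _ x y =>
      let d : H.Dart := ⟨(x, y), he⟩
      have hfib : ({d' : H.Dart | d'.edge = d.edge} : Finset _) = {d, d.symm} :=
        SimpleGraph.Dart.edge_fiber d
      have h : (Finset.univ.filter fun d' : H.Dart => d'.edge = s(x, y)) = {d, d.symm} := by
        convert hfib using 2
        exact Iff.rfl
      rw [h, Finset.sum_pair d.symm_ne.symm]
      rfl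
  have h2 : ∑ d : H.Dart, lam d.fst = ∑ v, (H.degree v : ℚ) * lam v := by
    rw [← Finset.sum_fiberwise_of_maps_to (s := (univ : Finset H.Dart))
      (t := (univ : Finset (Fin n))) (g := fun d : H.Dart => d.fst)
      (f := fun d => lam d.fst) (fun d _ => Finset.mem_univ _)]
    refine Finset.sum_congr rfl fun v _ => ?_
    rw [Finset.sum_congr rfl (fun d hd => by rw [(Finset.mem_filter.mp hd).2]),
      Finset.sum_const, ← SimpleGraph.dart_fst_fiber_card_eq_degree]
    rw [nsmul_eq_mul]
  rw [← h1, h2, Finset.mul_sum]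
  exact Finset.sum_congr rfl fun v _ => by rw [hdeg2, Nat.cast_ofNat]
end
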